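/- Assume f̃(0) > 0, i.e. p > r(c + α ξ(0))/(1 − ξ(0)). Then there exists a unique θ* ∈ (0,k) satisfying the smooth-pasting equation F(θ*) = 0, where F(θ) = ( μ/σ² − Ξ coth(Ξ(k−θ)) ) f̃(θ) − f̃'(θ); moreover θ* lies in (0, θ₀), where θ₀ is the unique zero of f̃ in (0,k). -/

import Mathlib

open Real Set

noncomputable section

/-- `Ξ = sqrt(2r/σ² + μ²/σ⁴)`. -/
def Xi (r μ σ : ℝ) : ℝ := Real.sqrt (2 * r / σ ^ 2 + μ ^ 2 / σ ^ 4)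

/-- The closed-form expression for the Laplace transform
`ξ(y) = E[e^{-r τ_D(k)} | D_0 = y]` of the drawdown time of a Brownian motion
with drift `μ` and volatility `σ`. -/
def xiFormula (r μ σ k y : ℝ) : ℝ :=
  exp (μ / σ ^ 2 * (y - k)) * (sinh (Xi r μ σ * y) / sinh (Xi r μ σ * k)) +
    exp (μ / σ ^ 2 * y) * (sinh (Xi r μ σ * (k - y)) / sinh (Xi r μ σ * k)) *
      (exp (-(μ / σ ^ 2) * k) * Xi r μ σ /
        (Xi r μ σ * cosh (Xi r μ σ * k) - μ / σ ^ 2 * sinh (Xi r μ σ * k)))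

/-- `f̃(y) = p/r - (α + p/r) ξ(y) - c`. -/
def ftilde (r μ σ k p α c y : ℝ) : ℝ :=
  p / r - (α + p / r) * xiFormula r μ σ k y - c

/-- The smooth-pasting function
`F(θ) = (μ/σ² - Ξ coth(Ξ(k-θ))) f̃(θ) - f̃'(θ)`. -/
def smoothPastingF (r μ σ k p α c θ : ℝ) : ℝ :=
  (μ / σ ^ 2 - Xi r μ σ * (cosh (Xi r μ σ * (k - θ)) / sinh (Xi r μ σ * (k - θ)))) *
      ftilde r μ σ k p α c θ -
    deriv (fun u => ftilde r μ σ k p α c u) θ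

/-! ### Auxiliary lemmas -/

lemma Xi_pos' {σ μ r : ℝ} (hσ : 0 < σ) (hr : 0 < r) : 0 < Xi r μ σ := by
  apply Real.sqrt_pos.2
  have h1 : 0 < 2 * r / σ ^ 2 := by positivity
  have h2 : 0 ≤ μ ^ 2 / σ ^ 4 := by positivity
  linarith

lemma Xi_sq' {σ μ r : ℝ} (hσ : 0 < σ) (hr : 0 < r) :
    (Xi r μ σ) ^ 2 = 2 * r / σ ^ 2 + (μ / σ ^ 2) ^ 2 := by
  have h : (μ / σ ^ 2) ^ 2 = μ ^ 2 / σ ^ 4 := by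
    field_simp
  rw [Xi, Real.sq_sqrt (by positivity), h]

lemma m_sq_lt' {σ μ r : ℝ} (hσ : 0 < σ) (hr : 0 < r) :
    (μ / σ ^ 2) ^ 2 < (Xi r μ σ) ^ 2 := by
  rw [Xi_sq' hσ hr]
  have : 0 < 2 * r / σ ^ 2 := by positivity
  linarith

lemma abs_m_lt' {σ μ r : ℝ} (hσ : 0 < σ) (hr : 0 < r) :
    |μ / σ ^ 2| < Xi r μ σ := by
  have := m_sq_lt' (μ := μ) hσ hr
  nlinarith [abs_nonneg (μ / σ ^ 2), sq_abs (μ / σ ^ 2), Xi_pos' (μ := μ) hσ hr]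

lemma sinh_lt_cosh'' (x : ℝ) : sinh x < cosh x := by
  have := Real.cosh_sub_sinh x
  have := Real.exp_pos (-x)
  linarith

lemma D_pos' {σ μ r : ℝ} (hσ : 0 < σ) (hr : 0 < r) {t : ℝ} (ht : 0 < t) :
    0 < Xi r μ σ * cosh (Xi r μ σ * t) - μ / σ ^ 2 * sinh (Xi r μ σ * t) := by
  have hX := Xi_pos' (μ := μ) hσ hr
  have hs : 0 ≤ sinh (Xi r μ σ * t) := by
    rw [Real.sinh_nonneg_iff]; positivity
  have h1 : μ / σ ^ 2 * sinh (Xi r μ σ * t) ≤ |μ / σ ^ 2| * sinh (Xi r μ σ * t) :=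
    mul_le_mul_of_nonneg_right (le_abs_self _) hs
  have h2 : |μ / σ ^ 2| * sinh (Xi r μ σ * t) < Xi r μ σ * cosh (Xi r μ σ * t) := by
    have := sinh_lt_cosh'' (Xi r μ σ * t)
    have := abs_m_lt' (μ := μ) hσ hr
    nlinarith [abs_nonneg (μ / σ ^ 2), Real.cosh_pos (Xi r μ σ * t)]
  linarith

lemma hasDerivAt_xi (σ μ r k y : ℝ)
    (hS : sinh (Xi r μ σ * k) ≠ 0)
    (hD : Xi r μ σ * cosh (Xi r μ σ * k) - μ / σ ^ 2 * sinh (Xi r μ σ * k) ≠ 0) :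
    HasDerivAt (fun y => xiFormula r μ σ k y)
      (exp (μ / σ ^ 2 * (y - k)) * ((Xi r μ σ) ^ 2 - (μ / σ ^ 2) ^ 2) * sinh (Xi r μ σ * y) /
        (Xi r μ σ * cosh (Xi r μ σ * k) - μ / σ ^ 2 * sinh (Xi r μ σ * k))) y := by
  set m := μ / σ ^ 2 with hm
  set X := Xi r μ σ with hX
  have h1 : HasDerivAt (fun y : ℝ => m * (y - k)) m y := by
    simpa using ((hasDerivAt_id y).sub_const k).const_mul m
  have hE1 := h1.exp
  have h2 : HasDerivAt (fun y : ℝ => X * y) X y := by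
    simpa using (hasDerivAt_id y).const_mul X
  have hS1 := h2.sinh
  have h3 : HasDerivAt (fun y : ℝ => m * y) m y := by
    simpa using (hasDerivAt_id y).const_mul m
  have hE2 := h3.exp
  have h4 : HasDerivAt (fun y : ℝ => X * (k - y)) (-X) y := by
    have := ((hasDerivAt_id y).const_sub k).const_mul X
    simpa using this
  have hS2 := h4.sinh
  have H := (hE1.mul (hS1.div_const (sinh (X * k)))).add
    (((hE2.mul (hS2.div_const (sinh (X * k))))).mul_const
      (exp (-m * k) * X / (X * cosh (X * k) - m * sinh (X * k))))
  refine H.congr_deriv ?_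
  symm
  rw [show m * (y - k) = m * y - m * k by ring, Real.exp_sub,
    show -m * k = -(m * k) by ring, Real.exp_neg,
    show X * (k - y) = X * k - X * y by ring, Real.sinh_sub, Real.cosh_sub]
  have hek := Real.exp_ne_zero (m * k)
  field_simp
  have hS' : sinh (k * X) ≠ 0 := by rwa [mul_comm]
  have hD' : X * cosh (k * X) - m * sinh (k * X) ≠ 0 := by rwa [mul_comm k X]
  field_simp
  ring

lemma hasDerivAt_ftilde (σ μ r k p α c y : ℝ)
    (hS : sinh (Xi r μ σ * k) ≠ 0)
    (hD : Xi r μ σ * cosh (Xi r μ σ * k) - μ / σ ^ 2 * sinh (Xi r μ σ * k) ≠ 0) :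
    HasDerivAt (fun y => ftilde r μ σ k p α c y)
      (-((α + p / r) *
        (exp (μ / σ ^ 2 * (y - k)) * ((Xi r μ σ) ^ 2 - (μ / σ ^ 2) ^ 2) * sinh (Xi r μ σ * y) /
          (Xi r μ σ * cosh (Xi r μ σ * k) - μ / σ ^ 2 * sinh (Xi r μ σ * k))))) y := by
  have h := (((hasDerivAt_xi σ μ r k y hS hD).const_mul (α + p / r)).const_sub (p / r)).sub_const c
  exact h

set_option maxHeartbeats 1000000 in
lemma key_id (σ μ r k θ : ℝ)
    (hS : sinh (Xi r μ σ * k) ≠ 0)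
    (hD : Xi r μ σ * cosh (Xi r μ σ * k) - μ / σ ^ 2 * sinh (Xi r μ σ * k) ≠ 0) :
    (Xi r μ σ * cosh (Xi r μ σ * (k - θ)) - μ / σ ^ 2 * sinh (Xi r μ σ * (k - θ))) *
        xiFormula r μ σ k θ +
      sinh (Xi r μ σ * (k - θ)) *
        (exp (μ / σ ^ 2 * (θ - k)) * ((Xi r μ σ) ^ 2 - (μ / σ ^ 2) ^ 2) * sinh (Xi r μ σ * θ) /
          (Xi r μ σ * cosh (Xi r μ σ * k) - μ / σ ^ 2 * sinh (Xi r μ σ * k))) =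
      Xi r μ σ * exp (μ / σ ^ 2 * (θ - k)) := by
  simp only [xiFormula]
  set m := μ / σ ^ 2 with hm
  set X := Xi r μ σ with hX
  clear_value m X
  rw [show X * (k - θ) = X * k - X * θ by ring, Real.sinh_sub, Real.cosh_sub,
    Real.sinh_eq (X * θ), Real.cosh_eq (X * θ), Real.exp_neg (X * θ),
    show m * (θ - k) = m * θ - m * k by ring, Real.exp_sub,
    show -m * k = -(m * k) by ring, Real.exp_neg (m * k)]
  have hET : exp (X * θ) ≠ 0 := Real.exp_ne_zero _
  have hEM : exp (m * θ) ≠ 0 := Real.exp_ne_zero _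
  have hEK : exp (m * k) ≠ 0 := Real.exp_ne_zero _
  set Sk := sinh (X * k) with hSkd
  set Ck := cosh (X * k) with hCkd
  set ET := exp (X * θ) with hETd
  set EM := exp (m * θ) with hEMd
  set EK := exp (m * k) with hEKd
  set D := X * Ck - m * Sk with hDd
  clear_value Sk Ck ET EM EK D
  field_simp
  rw [hDd]
  ring

set_option maxHeartbeats 1000000 in
lemma master (σ μ r k p α c θ : ℝ) (hr : r ≠ 0)
    (hS : sinh (Xi r μ σ * k) ≠ 0)
    (hD : Xi r μ σ * cosh (Xi r μ σ * k) - μ / σ ^ 2 * sinh (Xi r μ σ * k) ≠ 0)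
    (hsu : sinh (Xi r μ σ * (k - θ)) ≠ 0) :
    smoothPastingF r μ σ k p α c θ =
      exp (μ / σ ^ 2 * (θ - k)) *
        ((α + p / r) * Xi r μ σ - (p / r - c) *
          (exp (μ / σ ^ 2 * (k - θ)) *
            (Xi r μ σ * cosh (Xi r μ σ * (k - θ)) - μ / σ ^ 2 * sinh (Xi r μ σ * (k - θ))))) /
        sinh (Xi r μ σ * (k - θ)) := by
  have hder := (hasDerivAt_ftilde σ μ r k p α c θ hS hD).deriv
  have h6a := key_id σ μ r k θ hS hD
  have hE2 : exp (μ / σ ^ 2 * (θ - k)) * exp (μ / σ ^ 2 * (k - θ)) = 1 := by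
    rw [← Real.exp_add, show μ / σ ^ 2 * (θ - k) + μ / σ ^ 2 * (k - θ) = 0 by ring, Real.exp_zero]
  have hE0 : exp (μ / σ ^ 2 * (θ - k)) ≠ 0 := Real.exp_ne_zero _
  simp only [smoothPastingF]
  rw [hder]
  simp only [ftilde]
  set m := μ / σ ^ 2 with hm
  set X := Xi r μ σ with hX
  clear_value m X
  set xi := xiFormula r μ σ k θ with hxi
  set su := sinh (X * (k - θ)) with hsud
  set cu := cosh (X * (k - θ)) with hcud
  set E := exp (m * (θ - k)) with hEd
  set E' := exp (m * (k - θ)) with hE'd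
  set xd := E * (X ^ 2 - m ^ 2) * sinh (X * θ) / (X * cosh (X * k) - m * sinh (X * k)) with hxdd
  clear_value xi su cu E E' xd
  have hxd2 : xd = (X * E - (X * cu - m * su) * xi) / su := by
    rw [eq_div_iff hsu]; linarith [h6a]
  have hE'2 : E' = 1 / E := by
    rw [eq_div_iff hE0]; linarith [hE2]
  rw [hxd2, hE'2]
  field_simp
  ring

lemma xiFormula_zero (σ μ r k : ℝ) (hS : sinh (Xi r μ σ * k) ≠ 0) :
    xiFormula r μ σ k 0 =
      exp (-(μ / σ ^ 2) * k) * Xi r μ σ /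
        (Xi r μ σ * cosh (Xi r μ σ * k) - μ / σ ^ 2 * sinh (Xi r μ σ * k)) := by
  simp [xiFormula, div_self hS]

lemma xiFormula_k (σ μ r k : ℝ) (hS : sinh (Xi r μ σ * k) ≠ 0) :
    xiFormula r μ σ k k = 1 := by
  simp [xiFormula, div_self hS]

/-- The auxiliary function `q(θ) = e^{m(k-θ)}(Ξ cosh(Ξ(k-θ)) - m sinh(Ξ(k-θ)))`. -/
def qfun (σ μ r k θ : ℝ) : ℝ :=
  exp (μ / σ ^ 2 * (k - θ)) *
    (Xi r μ σ * cosh (Xi r μ σ * (k - θ)) - μ / σ ^ 2 * sinh (Xi r μ σ * (k - θ)))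

lemma hasDerivAt_qfun (σ μ r k θ : ℝ) :
    HasDerivAt (qfun σ μ r k)
      (-(((Xi r μ σ) ^ 2 - (μ / σ ^ 2) ^ 2) * exp (μ / σ ^ 2 * (k - θ)) *
        sinh (Xi r μ σ * (k - θ)))) θ := by
  unfold qfun
  set m := μ / σ ^ 2 with hm
  set X := Xi r μ σ with hX
  have h1 : HasDerivAt (fun θ : ℝ => m * (k - θ)) (-m) θ := by
    have := ((hasDerivAt_id θ).const_sub k).const_mul m
    simpa using this
  have hE := h1.exp
  have h2 : HasDerivAt (fun θ : ℝ => X * (k - θ)) (-X) θ := by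
    have := ((hasDerivAt_id θ).const_sub k).const_mul X
    simpa using this
  have hc := h2.cosh
  have hs := h2.sinh
  have H := hE.mul ((hc.const_mul X).sub (hs.const_mul m))
  refine H.congr_deriv ?_
  symm
  simp only [Pi.sub_apply]
  ring

lemma qfun_strictAnti {σ μ r k : ℝ} (hσ : 0 < σ) (hr : 0 < r) (hk : 0 < k) :
    StrictAntiOn (qfun σ μ r k) (Icc 0 k) := by
  apply strictAntiOn_of_deriv_neg (convex_Icc 0 k)
  · exact fun x _ => (hasDerivAt_qfun σ μ r k x).continuousAt.continuousWithinAt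
  · intro x hx
    rw [interior_Icc] at hx
    rw [(hasDerivAt_qfun σ μ r k x).deriv]
    have h1 : 0 < (Xi r μ σ) ^ 2 - (μ / σ ^ 2) ^ 2 := by
      have := m_sq_lt' (μ := μ) hσ hr; linarith
    have h2 : 0 < exp (μ / σ ^ 2 * (k - x)) := Real.exp_pos _
    have h3 : 0 < sinh (Xi r μ σ * (k - x)) := by
      rw [Real.sinh_pos_iff]
      have := Xi_pos' (μ := μ) hσ hr
      have : 0 < k - x := by linarith [hx.2]
      positivity
    have := mul_pos (mul_pos h1 h2) h3
    linarith

set_option maxHeartbeats 1000000 in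
theorem smooth_pasting_exists_unique (σ μ r k p α c : ℝ)
    (hσ : 0 < σ) (hr : 0 < r) (hk : 0 < k) (hα : 0 < α) (hc : 0 < c)
    (h0 : 0 < ftilde r μ σ k p α c 0) :
    ∃ θstar ∈ Set.Ioo (0 : ℝ) k,
      smoothPastingF r μ σ k p α c θstar = 0 ∧
        (∀ θ ∈ Set.Ioo (0 : ℝ) k, smoothPastingF r μ σ k p α c θ = 0 → θ = θstar) ∧
        (∃! θ₀, θ₀ ∈ Set.Ioo (0 : ℝ) k ∧ ftilde r μ σ k p α c θ₀ = 0) ∧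
        ∀ θ₀ ∈ Set.Ioo (0 : ℝ) k, ftilde r μ σ k p α c θ₀ = 0 → θstar < θ₀ := by
  have hXpos : 0 < Xi r μ σ := Xi_pos' hσ hr
  have hm2 : (μ / σ ^ 2) ^ 2 < (Xi r μ σ) ^ 2 := m_sq_lt' hσ hr
  have hSpos : 0 < sinh (Xi r μ σ * k) := by rw [Real.sinh_pos_iff]; positivity
  have hS : sinh (Xi r μ σ * k) ≠ 0 := hSpos.ne'
  have hDpos : 0 < Xi r μ σ * cosh (Xi r μ σ * k) - μ / σ ^ 2 * sinh (Xi r μ σ * k) :=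
    D_pos' hσ hr hk
  have hD := hDpos.ne'
  have hsupos : ∀ θ ∈ Ioo (0 : ℝ) k, 0 < sinh (Xi r μ σ * (k - θ)) := by
    intro θ hθ
    rw [Real.sinh_pos_iff]
    have h1 : 0 < k - θ := by linarith [hθ.2]
    positivity
  set G : ℝ → ℝ := fun θ => (α + p / r) * Xi r μ σ - (p / r - c) * qfun σ μ r k θ with hG
  have hq0 : qfun σ μ r k 0 = exp (μ / σ ^ 2 * k) *
      (Xi r μ σ * cosh (Xi r μ σ * k) - μ / σ ^ 2 * sinh (Xi r μ σ * k)) := by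
    simp [qfun]
  have hqk : qfun σ μ r k k = Xi r μ σ := by
    simp [qfun]
  -- `G 0 < 0` follows from `h0`
  have hf0 : 0 < (p / r - c) - (α + p / r) *
      (exp (-(μ / σ ^ 2) * k) * Xi r μ σ /
        (Xi r μ σ * cosh (Xi r μ σ * k) - μ / σ ^ 2 * sinh (Xi r μ σ * k))) := by
    have h1 := h0
    rw [ftilde, xiFormula_zero σ μ r k hS] at h1
    linarith
  have hee : exp (-(μ / σ ^ 2) * k) * exp (μ / σ ^ 2 * k) = 1 := by
    rw [← Real.exp_add, show -(μ / σ ^ 2) * k + μ / σ ^ 2 * k = 0 by ring, Real.exp_zero]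
  have hf0' : (α + p / r) * (exp (-(μ / σ ^ 2) * k) * Xi r μ σ) <
      (p / r - c) * (Xi r μ σ * cosh (Xi r μ σ * k) - μ / σ ^ 2 * sinh (Xi r μ σ * k)) := by
    have h2 : (α + p / r) * (exp (-(μ / σ ^ 2) * k) * Xi r μ σ) /
        (Xi r μ σ * cosh (Xi r μ σ * k) - μ / σ ^ 2 * sinh (Xi r μ σ * k)) < p / r - c := by
      rw [mul_div_assoc]
      linarith [hf0]
    exact (div_lt_iff₀ hDpos).mp h2
  have hG0 : G 0 < 0 := by
    simp only [hG, hq0]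
    have h3 : (α + p / r) * Xi r μ σ =
        (α + p / r) * (exp (-(μ / σ ^ 2) * k) * Xi r μ σ) * exp (μ / σ ^ 2 * k) := by
      calc (α + p / r) * Xi r μ σ
          = (α + p / r) * Xi r μ σ * (exp (-(μ / σ ^ 2) * k) * exp (μ / σ ^ 2 * k)) := by
            rw [hee, mul_one]
        _ = (α + p / r) * (exp (-(μ / σ ^ 2) * k) * Xi r μ σ) * exp (μ / σ ^ 2 * k) := by ring
    rw [h3]
    have h4 := mul_lt_mul_of_pos_right hf0' (Real.exp_pos (μ / σ ^ 2 * k))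
    nlinarith [h4]
  have hGk : 0 < G k := by
    simp only [hG, hqk]
    nlinarith [mul_pos (show (0:ℝ) < α + c by linarith) hXpos]
  have hqanti := qfun_strictAnti (μ := μ) hσ hr hk
  have hq0k : qfun σ μ r k k < qfun σ μ r k 0 :=
    hqanti (left_mem_Icc.2 hk.le) (right_mem_Icc.2 hk.le) hk
  have hA : 0 < p / r - c := by
    by_contra h
    push_neg at h
    have h1 : (α + p / r) * Xi r μ σ - (p / r - c) * qfun σ μ r k 0 < 0 := hG0
    have h2 : 0 < (α + p / r) * Xi r μ σ - (p / r - c) * qfun σ μ r k k := hGk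
    have hneg : (p / r - c) * (qfun σ μ r k 0 - qfun σ μ r k k) ≤ 0 :=
      mul_nonpos_iff.2 (Or.inr ⟨h, by linarith [hq0k]⟩)
    nlinarith [h1, h2, hneg]
  have hβ : 0 < α + p / r := by
    have : 0 < p / r := by linarith
    linarith
  have hGmono : StrictMonoOn G (Icc 0 k) := by
    intro x hx y hy hxy
    have hq := hqanti hx hy hxy
    simp only [hG]
    nlinarith [mul_pos hA (sub_pos.2 hq)]
  have hGcont : ContinuousOn G (Icc 0 k) := fun x _ =>
    (((hasDerivAt_qfun σ μ r k x).const_mul (p / r - c)).const_sub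
      ((α + p / r) * Xi r μ σ)).continuousAt.continuousWithinAt
  obtain ⟨θs, hθs, hGθs⟩ := intermediate_value_Ioo hk.le hGcont ⟨hG0, hGk⟩
  have hFeq : ∀ θ ∈ Ioo (0 : ℝ) k, smoothPastingF r μ σ k p α c θ =
      exp (μ / σ ^ 2 * (θ - k)) * G θ / sinh (Xi r μ σ * (k - θ)) := by
    intro θ hθ
    rw [master σ μ r k p α c θ hr.ne' hS hD (hsupos θ hθ).ne']
    simp only [hG, qfun]
  -- derivative facts for ftilde
  have hfder := fun x => hasDerivAt_ftilde σ μ r k p α c x hS hD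
  have hfcont : ContinuousOn (fun y => ftilde r μ σ k p α c y) (Icc 0 k) := fun x _ =>
    (hfder x).continuousAt.continuousWithinAt
  have hfanti : StrictAntiOn (fun y => ftilde r μ σ k p α c y) (Icc 0 k) := by
    apply strictAntiOn_of_deriv_neg (convex_Icc 0 k) hfcont
    intro x hx
    rw [interior_Icc] at hx
    rw [(hfder x).deriv]
    have h1 : 0 < sinh (Xi r μ σ * x) := by
      rw [Real.sinh_pos_iff]; exact mul_pos hXpos hx.1
    have h2 : 0 < (α + p / r) *
        (exp (μ / σ ^ 2 * (x - k)) * ((Xi r μ σ) ^ 2 - (μ / σ ^ 2) ^ 2) * sinh (Xi r μ σ * x) /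
          (Xi r μ σ * cosh (Xi r μ σ * k) - μ / σ ^ 2 * sinh (Xi r μ σ * k))) := by
      apply mul_pos hβ
      apply div_pos _ hDpos
      apply mul_pos (mul_pos (Real.exp_pos _) (by linarith)) h1
    linarith
  have hfk : ftilde r μ σ k p α c k < 0 := by
    rw [ftilde, xiFormula_k σ μ r k hS]
    linarith
  obtain ⟨θz, hθz, hfθz0⟩ := intermediate_value_Ioo' hk.le hfcont ⟨hfk, h0⟩
  have hfθz : ftilde r μ σ k p α c θz = 0 := hfθz0
  refine ⟨θs, hθs, ?_, ?_, ?_, ?_⟩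
  · rw [hFeq θs hθs, hGθs, mul_zero, zero_div]
  · intro θ hθ hFθ
    rw [hFeq θ hθ] at hFθ
    have hGθ : G θ = 0 := by
      have hsu := (hsupos θ hθ).ne'
      have hE := Real.exp_ne_zero (μ / σ ^ 2 * (θ - k))
      rcases div_eq_zero_iff.1 hFθ with h1 | h1
      · rcases mul_eq_zero.1 h1 with h2 | h2
        · exact absurd h2 hE
        · exact h2
      · exact absurd h1 hsu
    exact hGmono.injOn (Ioo_subset_Icc_self hθ) (Ioo_subset_Icc_self hθs)
      (by rw [hGθ, hGθs])
  · refine ⟨θz, ⟨hθz, hfθz⟩, ?_⟩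
    rintro y ⟨hy, hfy⟩
    exact hfanti.injOn (Ioo_subset_Icc_self hy) (Ioo_subset_Icc_self hθz)
      (by rw [hfy, hfθz])
  · intro t ht hft
    have hFt : 0 < smoothPastingF r μ σ k p α c t := by
      simp only [smoothPastingF]
      rw [hft, mul_zero, zero_sub, (hfder t).deriv, neg_neg]
      have h1 : 0 < sinh (Xi r μ σ * t) := by
        rw [Real.sinh_pos_iff]; exact mul_pos hXpos ht.1
      apply mul_pos hβ
      apply div_pos _ hDpos
      apply mul_pos (mul_pos (Real.exp_pos _) (by linarith)) h1
    have hGt : 0 < G t := by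
      rw [hFeq t ht] at hFt
      have hsu := hsupos t ht
      have he := Real.exp_pos (μ / σ ^ 2 * (t - k))
      by_contra hle
      push_neg at hle
      have hnum : exp (μ / σ ^ 2 * (t - k)) * G t ≤ 0 :=
        mul_nonpos_iff.2 (Or.inl ⟨he.le, hle⟩)
      have : exp (μ / σ ^ 2 * (t - k)) * G t / sinh (Xi r μ σ * (k - t)) ≤ 0 :=
        div_nonpos_iff.2 (Or.inr ⟨hnum, hsu.le⟩)
      linarith
    rcases lt_trichotomy θs t with h | h | h
    · exact h
    · exfalso; rw [← h] at hGt; linarith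
    · exfalso
      have := hGmono (Ioo_subset_Icc_self ht) (Ioo_subset_Icc_self hθs) h
      linarith
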